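/- Suppose a state ω on a unital C*-algebra satisfies the uniform bound |ω(α_g(A)B) − ω(α_g A)ω(B)| ≤ C‖A‖‖B‖ f(g) for all A, B ∈ 𝔘 and g ∈ G, where f: G → ℝ_{>0} and C > 0. Then for each n ≥ 2 there exists a constant C_n > 0 such that |c_n(α_g A_1, A_2, ..., A_n)| ≤ C_n (Π_{j=1}^n ‖A_j‖) f(g) for all g with f(g) ≤ 1, where c_n is the n-th classical cumulant of ω. -/

import Mathlib

open scoped Classical
open Filter Topology

noncomputable section

/-- `π` is a set-partition of the finite set `S ⊆ ℕ`: a collection of nonempty subsets of `S`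
such that every element of `S` lies in exactly one of them. -/
def IsSetPartition (S : Finset ℕ) (π : Finset (Finset ℕ)) : Prop :=
  (∀ V ∈ π, V ⊆ S) ∧ (∀ V ∈ π, V.Nonempty) ∧ ∀ a ∈ S, ∃! V, V ∈ π ∧ a ∈ V

/-- The finset of all set-partitions of `S`. -/
def setPartitions (S : Finset ℕ) : Finset (Finset (Finset ℕ)) :=
  S.powerset.powerset.filter (IsSetPartition S)

/-- A family of blocks is non-crossing if there are no `a < b < c < d` with `a, c` in one
block and `b, d` in a different block. -/
def IsNonCrossing (π : Finset (Finset ℕ)) : Prop :=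
  ¬ ∃ a b c d : ℕ, a < b ∧ b < c ∧ c < d ∧
      ∃ V ∈ π, ∃ W ∈ π, V ≠ W ∧ a ∈ V ∧ c ∈ V ∧ b ∈ W ∧ d ∈ W

/-- The finset of all non-crossing partitions of `S`. -/
def ncPartitions (S : Finset ℕ) : Finset (Finset (Finset ℕ)) :=
  (setPartitions S).filter IsNonCrossing

variable {𝔘 : Type*}

/-- The ordered list `A_{i_1}, …, A_{i_s}` of observables indexed by `V = {i_1 < ⋯ < i_s}`. -/
def blockList (A : ℕ → 𝔘) (V : Finset ℕ) : List 𝔘 :=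
  (V.sort (· ≤ ·)).map A

/-- The ordered product `A_{i_1} ⋯ A_{i_s}` over the block `V = {i_1 < ⋯ < i_s}`. -/
def blockProd [Monoid 𝔘] (A : ℕ → 𝔘) (V : Finset ℕ) : 𝔘 :=
  (blockList A V).prod

/-- The joint classical cumulant of `ω` of the observables `A_i`, `i ∈ S` (order preserved):
`c(S) = ∑_{π ∈ P(S)} (-1)^{|π|-1}(|π|-1)! ∏_{V ∈ π} ω(∏_{i ∈ V} A_i)`. -/
def cumulant [Monoid 𝔘] (ω : 𝔘 → ℂ) (A : ℕ → 𝔘) (S : Finset ℕ) : ℂ :=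
  ∑ π ∈ setPartitions S,
    (-1 : ℂ) ^ (π.card - 1) * ((π.card - 1).factorial : ℂ) * ∏ V ∈ π, ω (blockProd A V)

/-- `κ` (as a function of the ordered list of observables) is the family of free cumulants of
`ω`: it satisfies the moments-to-free-cumulants formula over non-crossing partitions. -/
def IsFreeCumulantFamily [Monoid 𝔘] (ω : 𝔘 → ℂ) (κ : List 𝔘 → ℂ) : Prop :=
  ∀ (A : ℕ → 𝔘) (S : Finset ℕ), S.Nonempty →
    ω (blockProd A S) = ∑ π ∈ ncPartitions S, ∏ V ∈ π, κ (blockList A V)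

/-- A state on a unital C*-algebra: a positive unital linear functional. -/
structure IsState [NormedRing 𝔘] [StarRing 𝔘] [NormedAlgebra ℂ 𝔘] (ω : 𝔘 →ₗ[ℂ] ℂ) : Prop where
  unital : ω 1 = 1
  positive : ∀ a : 𝔘, 0 ≤ (ω (star a * a)).re ∧ (ω (star a * a)).im = 0

/-- `α` is a representation of the group `G` by *-automorphisms. -/
def IsStarAutoRep {G : Type*} [Monoid G] [Ring 𝔘] [Algebra ℂ 𝔘] [StarRing 𝔘]
    (α : G → 𝔘 ≃⋆ₐ[ℂ] 𝔘) : Prop :=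
  ∀ (g h : G) (x : 𝔘), α (g * h) x = α g (α h x)

lemma mem_setPartitions {S : Finset ℕ} {π : Finset (Finset ℕ)} :
    π ∈ setPartitions S ↔ IsSetPartition S π := by
  constructor
  · intro h; exact (Finset.mem_filter.1 h).2
  · intro h
    refine Finset.mem_filter.2 ⟨Finset.mem_powerset.2 fun V hV => Finset.mem_powerset.2 (h.1 V hV), h⟩

lemma block_eq_block {S : Finset ℕ} {π : Finset (Finset ℕ)} (hπ : IsSetPartition S π)
    {V W : Finset ℕ} {a : ℕ} (hV : V ∈ π) (hW : W ∈ π) (haV : a ∈ V) (haW : a ∈ W) : V = W := by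
  have ha : a ∈ S := hπ.1 V hV haV
  obtain ⟨U, _, hU⟩ := hπ.2.2 a ha
  rw [hU V ⟨hV, haV⟩, hU W ⟨hW, haW⟩]

lemma biUnion_eq {S : Finset ℕ} {π : Finset (Finset ℕ)} (hπ : IsSetPartition S π) :
    π.biUnion id = S := by
  apply Finset.Subset.antisymm
  · intro a ha
    obtain ⟨V, hV, haV⟩ := Finset.mem_biUnion.1 ha
    exact hπ.1 V hV haV
  · intro a ha
    obtain ⟨V, ⟨hV, haV⟩, _⟩ := hπ.2.2 a ha
    exact Finset.mem_biUnion.2 ⟨V, hV, haV⟩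

lemma prod_partition {S : Finset ℕ} {π : Finset (Finset ℕ)} (hπ : IsSetPartition S π)
    (N : ℕ → ℝ) : ∏ V ∈ π, ∏ j ∈ V, N j = ∏ j ∈ S, N j := by
  conv_rhs => rw [← biUnion_eq hπ]
  rw [Finset.prod_biUnion]
  · rfl
  intro V hV W hW hVW
  simp only [Function.onFun, id]
  rw [Finset.disjoint_left]
  intro a haV haW
  exact hVW (block_eq_block hπ hV hW haV haW)

lemma sort_eq_cons {V : Finset ℕ} (h1 : 1 ∈ V) (hge : ∀ j ∈ V, 1 ≤ j) :
    V.sort (· ≤ ·) = 1 :: (V.erase 1).sort (· ≤ ·) := by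
  refine (fun hp h1 h2 => List.Perm.eq_of_pairwise' (r := (· ≤ ·)) h1 h2 hp) ?_ ?_ ?_
  · apply Multiset.coe_eq_coe.1
    show ((V.sort (· ≤ ·) : List ℕ) : Multiset ℕ) = ↑(1 :: (V.erase 1).sort (· ≤ ·))
    rw [Finset.sort_eq, show ((1 :: (V.erase 1).sort (fun x1 x2 => x1 ≤ x2) : List ℕ) : Multiset ℕ)
        = 1 ::ₘ ↑((V.erase 1).sort (fun x1 x2 => x1 ≤ x2)) from rfl,
      Finset.sort_eq, Finset.erase_val, Multiset.cons_erase (Finset.mem_val.mpr h1)]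
  · exact V.pairwise_sort _
  · refine List.pairwise_cons.2 ⟨?_, (V.erase 1).pairwise_sort _⟩
    intro b hb
    exact hge b (Finset.mem_of_mem_erase ((Finset.mem_sort _).1 hb))

lemma blockList_cons (A : ℕ → 𝔘) {V : Finset ℕ} (h1 : 1 ∈ V) (hge : ∀ j ∈ V, 1 ≤ j) :
    blockList A V = A 1 :: blockList A (V.erase 1) := by
  rw [blockList, sort_eq_cons h1 hge]; rfl

lemma blockProd_cons [Monoid 𝔘] (A : ℕ → 𝔘) {V : Finset ℕ} (h1 : 1 ∈ V)
    (hge : ∀ j ∈ V, 1 ≤ j) : blockProd A V = A 1 * blockProd A (V.erase 1) := by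
  rw [blockProd, blockList_cons A h1 hge, List.prod_cons]; rfl

lemma blockList_congr {A B : ℕ → 𝔘} {V : Finset ℕ} (h : ∀ j ∈ V, A j = B j) :
    blockList A V = blockList B V := by
  apply List.map_congr_left
  intro j hj
  exact h j ((Finset.mem_sort _).1 hj)

lemma norm_blockProd_le [NormedRing 𝔘] [NormOneClass 𝔘] (A : ℕ → 𝔘) (V : Finset ℕ) :
    ‖blockProd A V‖ ≤ ∏ j ∈ V, ‖A j‖ := by
  refine (List.norm_prod_le _).trans_eq ?_
  rw [blockList, List.map_map]
  show (((V.sort (· ≤ ·) : List ℕ) : Multiset ℕ).map (norm ∘ A)).prod = _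
  rw [Finset.sort_eq]
  rfl

lemma erase_one_nonempty {V : Finset ℕ} (h1 : 1 ∈ V) (hne : V ≠ {1}) :
    (V.erase 1).Nonempty := by
  by_contra h
  apply hne
  apply Finset.eq_singleton_iff_unique_mem.2
  refine ⟨h1, fun x hx => ?_⟩
  by_contra hx1
  exact h ⟨x, Finset.mem_erase.2 ⟨hx1, hx⟩⟩

lemma not_mem_of_mem_erase_block {S : Finset ℕ} {π : Finset (Finset ℕ)}
    (hπ : IsSetPartition S π) {V₁ : Finset ℕ} (hV₁ : V₁ ∈ π) (h1V₁ : 1 ∈ V₁)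
    {V : Finset ℕ} (hV : V ∈ π.erase V₁) : 1 ∉ V := by
  intro h1V
  exact (Finset.mem_erase.1 hV).1
    (block_eq_block hπ (Finset.mem_of_mem_erase hV) hV₁ h1V h1V₁)

lemma image_erase_one {S : Finset ℕ} {π : Finset (Finset ℕ)}
    (hπ : IsSetPartition S π) {V₁ : Finset ℕ} (hV₁ : V₁ ∈ π) (h1V₁ : 1 ∈ V₁) :
    π.image (fun V => V.erase 1) = insert (V₁.erase 1) (π.erase V₁) := by
  conv_lhs => rw [← Finset.insert_erase hV₁]
  rw [Finset.image_insert]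
  congr 1
  have : (π.erase V₁).image (fun V => V.erase 1) = (π.erase V₁).image id := by
    apply Finset.image_congr
    intro V hV
    exact Finset.erase_eq_of_notMem
      (not_mem_of_mem_erase_block hπ hV₁ h1V₁ (Finset.mem_coe.1 hV))
  rw [this, Finset.image_id]

lemma phi_eq {S : Finset ℕ} {π : Finset (Finset ℕ)}
    (hπ : IsSetPartition S π) {V₁ : Finset ℕ} (hV₁ : V₁ ∈ π) (h1V₁ : 1 ∈ V₁) :
    (π.image (fun V => V.erase 1)).erase ∅ =
      if V₁ = {1} then π.erase {1} else insert (V₁.erase 1) (π.erase V₁) := by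
  rw [image_erase_one hπ hV₁ h1V₁]
  by_cases hsing : V₁ = {1}
  · rw [if_pos hsing, hsing, Finset.erase_singleton]
    apply Finset.erase_insert
    intro h
    exact Finset.not_nonempty_empty (hπ.2.1 ∅ (Finset.mem_of_mem_erase h))
  · rw [if_neg hsing]
    apply Finset.erase_eq_of_notMem
    intro h
    rcases Finset.mem_insert.1 h with h | h
    · exact Finset.not_nonempty_empty (h ▸ erase_one_nonempty h1V₁ hsing)
    · exact Finset.not_nonempty_empty (hπ.2.1 ∅ (Finset.mem_of_mem_erase h))

lemma partA {S : Finset ℕ} (h1S : 1 ∈ S) {π' : Finset (Finset ℕ)}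
    (hπ' : IsSetPartition (S.erase 1) π') : IsSetPartition S (insert {1} π') := by
  have h1S' : 1 ∉ S.erase 1 := Finset.notMem_erase 1 S
  refine ⟨?_, ?_, ?_⟩
  · intro V hV
    rcases Finset.mem_insert.1 hV with rfl | hV
    · simpa using h1S
    · exact (hπ'.1 V hV).trans (Finset.erase_subset _ _)
  · intro V hV
    rcases Finset.mem_insert.1 hV with rfl | hV
    · exact ⟨1, Finset.mem_singleton_self 1⟩
    · exact hπ'.2.1 V hV
  · intro a ha
    by_cases ha1 : a = 1
    · subst ha1
      refine ⟨{1}, ⟨Finset.mem_insert_self _ _, Finset.mem_singleton_self 1⟩, ?_⟩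
      rintro V ⟨hV, h1V⟩
      rcases Finset.mem_insert.1 hV with rfl | hV
      · rfl
      · exact absurd (hπ'.1 V hV h1V) h1S'
    · obtain ⟨U, ⟨hU, haU⟩, hUuniq⟩ := hπ'.2.2 a (Finset.mem_erase.2 ⟨ha1, ha⟩)
      refine ⟨U, ⟨Finset.mem_insert_of_mem hU, haU⟩, ?_⟩
      rintro V ⟨hV, haV⟩
      rcases Finset.mem_insert.1 hV with rfl | hV
      · exact absurd (Finset.mem_singleton.1 haV) ha1
      · exact hUuniq V ⟨hV, haV⟩

lemma partB {S : Finset ℕ} (h1S : 1 ∈ S) {π' : Finset (Finset ℕ)}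
    (hπ' : IsSetPartition (S.erase 1) π') {W : Finset ℕ} (hW : W ∈ π') :
    IsSetPartition S (insert (insert 1 W) (π'.erase W)) := by
  have h1S' : 1 ∉ S.erase 1 := Finset.notMem_erase 1 S
  refine ⟨?_, ?_, ?_⟩
  · intro V hV
    rcases Finset.mem_insert.1 hV with rfl | hV
    · exact Finset.insert_subset h1S ((hπ'.1 W hW).trans (Finset.erase_subset _ _))
    · exact (hπ'.1 V (Finset.mem_of_mem_erase hV)).trans (Finset.erase_subset _ _)
  · intro V hV
    rcases Finset.mem_insert.1 hV with rfl | hV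
    · exact Finset.insert_nonempty _ _
    · exact hπ'.2.1 V (Finset.mem_of_mem_erase hV)
  · intro a ha
    by_cases ha1 : a = 1
    · subst ha1
      refine ⟨insert 1 W, ⟨Finset.mem_insert_self _ _, Finset.mem_insert_self 1 W⟩, ?_⟩
      rintro V ⟨hV, h1V⟩
      rcases Finset.mem_insert.1 hV with rfl | hV
      · rfl
      · exact absurd (hπ'.1 V (Finset.mem_of_mem_erase hV) h1V) h1S'
    · obtain ⟨U, ⟨hU, haU⟩, hUuniq⟩ := hπ'.2.2 a (Finset.mem_erase.2 ⟨ha1, ha⟩)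
      by_cases hUW : U = W
      · refine ⟨insert 1 W, ⟨Finset.mem_insert_self _ _,
          Finset.mem_insert_of_mem (hUW ▸ haU)⟩, ?_⟩
        rintro V ⟨hV, haV⟩
        rcases Finset.mem_insert.1 hV with rfl | hV
        · rfl
        · exact absurd ((hUuniq V ⟨Finset.mem_of_mem_erase hV, haV⟩).trans hUW)
            (Finset.mem_erase.1 hV).1
      · refine ⟨U, ⟨Finset.mem_insert_of_mem (Finset.mem_erase.2 ⟨hUW, hU⟩), haU⟩, ?_⟩
        rintro V ⟨hV, haV⟩
        rcases Finset.mem_insert.1 hV with rfl | hV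
        · have haW : a ∈ W := (Finset.mem_insert.1 haV).resolve_left ha1
          exact absurd (hUuniq W ⟨hW, haW⟩).symm hUW
        · exact hUuniq V ⟨Finset.mem_of_mem_erase hV, haV⟩

lemma partC {S : Finset ℕ} {π : Finset (Finset ℕ)} (hπ : IsSetPartition S π)
    {V₁ : Finset ℕ} (hV₁ : V₁ ∈ π) (h1V₁ : 1 ∈ V₁) :
    IsSetPartition (S.erase 1) ((π.image (fun V => V.erase 1)).erase ∅) := by
  rw [phi_eq hπ hV₁ h1V₁]
  by_cases hsing : V₁ = {1}
  · rw [if_pos hsing]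
    subst hsing
    refine ⟨?_, ?_, ?_⟩
    · intro V hV
      refine Finset.subset_erase.2 ⟨hπ.1 V (Finset.mem_of_mem_erase hV), ?_⟩
      exact not_mem_of_mem_erase_block hπ hV₁ h1V₁ hV
    · exact fun V hV => hπ.2.1 V (Finset.mem_of_mem_erase hV)
    · intro a ha
      have ha1 : a ≠ 1 := (Finset.mem_erase.1 ha).1
      obtain ⟨U, ⟨hU, haU⟩, hUuniq⟩ := hπ.2.2 a (Finset.mem_of_mem_erase ha)
      have hU1 : U ≠ {1} := by
        rintro rfl
        exact ha1 (Finset.mem_singleton.1 haU)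
      refine ⟨U, ⟨Finset.mem_erase.2 ⟨hU1, hU⟩, haU⟩, ?_⟩
      rintro V ⟨hV, haV⟩
      exact hUuniq V ⟨Finset.mem_of_mem_erase hV, haV⟩
  · rw [if_neg hsing]
    refine ⟨?_, ?_, ?_⟩
    · intro V hV
      rcases Finset.mem_insert.1 hV with rfl | hV
      · exact Finset.erase_subset_erase 1 (hπ.1 V₁ hV₁)
      · exact Finset.subset_erase.2 ⟨hπ.1 V (Finset.mem_of_mem_erase hV),
          not_mem_of_mem_erase_block hπ hV₁ h1V₁ hV⟩
    · intro V hV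
      rcases Finset.mem_insert.1 hV with rfl | hV
      · exact erase_one_nonempty h1V₁ hsing
      · exact hπ.2.1 V (Finset.mem_of_mem_erase hV)
    · intro a ha
      have ha1 : a ≠ 1 := (Finset.mem_erase.1 ha).1
      obtain ⟨U, ⟨hU, haU⟩, hUuniq⟩ := hπ.2.2 a (Finset.mem_of_mem_erase ha)
      by_cases hUV₁ : U = V₁
      · refine ⟨V₁.erase 1, ⟨Finset.mem_insert_self _ _,
          Finset.mem_erase.2 ⟨ha1, hUV₁ ▸ haU⟩⟩, ?_⟩
        rintro V ⟨hV, haV⟩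
        rcases Finset.mem_insert.1 hV with rfl | hV
        · rfl
        · exact absurd ((hUuniq V ⟨Finset.mem_of_mem_erase hV, haV⟩).trans hUV₁)
            (Finset.mem_erase.1 hV).1
      · refine ⟨U, ⟨Finset.mem_insert_of_mem (Finset.mem_erase.2 ⟨hUV₁, hU⟩), haU⟩, ?_⟩
        rintro V ⟨hV, haV⟩
        rcases Finset.mem_insert.1 hV with rfl | hV
        · exact absurd (hUuniq V₁ ⟨hV₁, Finset.mem_of_mem_erase haV⟩).symm hUV₁
        · exact hUuniq V ⟨Finset.mem_of_mem_erase hV, haV⟩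

/-- Forward map: from (partition of `S'`, optional block) to a partition of `S`. -/
def pmapI (p : (_ : Finset (Finset ℕ)) × Finset ℕ) : Finset (Finset ℕ) :=
  if p.2 = ∅ then insert {1} p.1 else insert (insert 1 p.2) (p.1.erase p.2)

/-- Backward map. -/
def pmapJ (π : Finset (Finset ℕ)) : (_ : Finset (Finset ℕ)) × Finset ℕ :=
  if h : ∃ V, V ∈ π ∧ 1 ∈ V then ⟨(π.image (fun V => V.erase 1)).erase ∅, h.choose.erase 1⟩
  else ⟨∅, ∅⟩

lemma blocks_not_one {S : Finset ℕ} {π' : Finset (Finset ℕ)}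
    (hπ' : IsSetPartition (S.erase 1) π') {W : Finset ℕ} (hW : W ∈ π') : 1 ∉ W :=
  fun h => Finset.notMem_erase 1 S (hπ'.1 W hW h)

lemma empty_not_mem {S : Finset ℕ} {π : Finset (Finset ℕ)} (hπ : IsSetPartition S π) :
    ∅ ∉ π := fun h => Finset.not_nonempty_empty (hπ.2.1 ∅ h)

lemma singleton_one_not_mem {S : Finset ℕ} {π' : Finset (Finset ℕ)}
    (hπ' : IsSetPartition (S.erase 1) π') : {1} ∉ π' :=
  fun h => blocks_not_one hπ' h (Finset.mem_singleton_self 1)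

lemma insert_one_not_mem_erase {S : Finset ℕ} {π' : Finset (Finset ℕ)}
    (hπ' : IsSetPartition (S.erase 1) π') (W W' : Finset ℕ) :
    insert 1 W ∉ π'.erase W' := fun h =>
  blocks_not_one hπ' (Finset.mem_of_mem_erase h) (Finset.mem_insert_self 1 W)

lemma pmapJ_pmapI {S : Finset ℕ} (h1S : 1 ∈ S) {π' : Finset (Finset ℕ)}
    (hπ' : IsSetPartition (S.erase 1) π') {W : Finset ℕ} (hW : W ∈ insert ∅ π') :
    pmapJ (pmapI ⟨π', W⟩) = ⟨π', W⟩ := by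
  rcases Finset.mem_insert.1 hW with rfl | hW
  · have hI : pmapI ⟨π', ∅⟩ = insert {1} π' := if_pos rfl
    rw [hI, pmapJ]
    have hπ₀ : IsSetPartition S (insert {1} π') := partA h1S hπ'
    have hex : ∃ V, V ∈ insert {1} π' ∧ 1 ∈ V :=
      ⟨{1}, Finset.mem_insert_self _ _, Finset.mem_singleton_self 1⟩
    rw [dif_pos hex]
    have hch : hex.choose = {1} :=
      block_eq_block hπ₀ hex.choose_spec.1 (Finset.mem_insert_self _ _)
        hex.choose_spec.2 (Finset.mem_singleton_self 1)
    have hphi : ((insert {1} π').image (fun V => V.erase 1)).erase ∅ = π' := by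
      rw [phi_eq hπ₀ (Finset.mem_insert_self _ _) (Finset.mem_singleton_self 1),
        if_pos rfl, Finset.erase_insert (singleton_one_not_mem hπ')]
    rw [hphi, hch, Finset.erase_singleton]
  · have hWne : W ≠ ∅ := Finset.nonempty_iff_ne_empty.1 (hπ'.2.1 W hW)
    have h1W : 1 ∉ W := blocks_not_one hπ' hW
    have hI : pmapI ⟨π', W⟩ = insert (insert 1 W) (π'.erase W) := if_neg hWne
    rw [hI, pmapJ]
    have hπW : IsSetPartition S (insert (insert 1 W) (π'.erase W)) := partB h1S hπ' hW
    have hmem : insert 1 W ∈ insert (insert 1 W) (π'.erase W) := Finset.mem_insert_self _ _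
    have h1mem : (1 : ℕ) ∈ insert 1 W := Finset.mem_insert_self 1 W
    have hex : ∃ V, V ∈ insert (insert 1 W) (π'.erase W) ∧ 1 ∈ V := ⟨insert 1 W, hmem, h1mem⟩
    rw [dif_pos hex]
    have hch : hex.choose = insert 1 W :=
      block_eq_block hπW hex.choose_spec.1 hmem hex.choose_spec.2 h1mem
    have hnsing : insert 1 W ≠ {1} := by
      intro h
      obtain ⟨x, hx⟩ := hπ'.2.1 W hW
      have : x ∈ ({1} : Finset ℕ) := h ▸ Finset.mem_insert_of_mem hx
      exact h1W (Finset.mem_singleton.1 this ▸ hx)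
    have hphi : ((insert (insert 1 W) (π'.erase W)).image (fun V => V.erase 1)).erase ∅
        = π' := by
      rw [phi_eq hπW hmem h1mem, if_neg hnsing, Finset.erase_insert
        (insert_one_not_mem_erase hπ' W W), Finset.erase_insert h1W,
        Finset.insert_erase hW]
    rw [hphi, hch, Finset.erase_insert h1W]

lemma pmapI_pmapJ {S : Finset ℕ} (h1S : 1 ∈ S) {π : Finset (Finset ℕ)}
    (hπ : IsSetPartition S π) : pmapI (pmapJ π) = π := by
  obtain ⟨V₁', ⟨hV₁', h1V₁'⟩, _⟩ := hπ.2.2 1 h1S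
  have hex : ∃ V, V ∈ π ∧ 1 ∈ V := ⟨V₁', hV₁', h1V₁'⟩
  rw [pmapJ, dif_pos hex]
  set V₁ := hex.choose with hV₁def
  have hV₁ : V₁ ∈ π := hex.choose_spec.1
  have h1V₁ : 1 ∈ V₁ := hex.choose_spec.2
  by_cases hsing : V₁ = {1}
  · have hsnd : V₁.erase 1 = ∅ := by rw [hsing, Finset.erase_singleton]
    simp only [pmapI]
    rw [if_pos hsnd]
    rw [phi_eq hπ hV₁ h1V₁, if_pos hsing, ← hsing, Finset.insert_erase hV₁]
  · have hsnd : V₁.erase 1 ≠ ∅ :=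
      Finset.nonempty_iff_ne_empty.1 (erase_one_nonempty h1V₁ hsing)
    simp only [pmapI]
    rw [if_neg hsnd]
    rw [phi_eq hπ hV₁ h1V₁, if_neg hsing, Finset.insert_erase h1V₁]
    have hne : V₁.erase 1 ∉ π.erase V₁ := by
      intro hmem
      obtain ⟨x, hx⟩ := erase_one_nonempty h1V₁ hsing
      have heq : V₁.erase 1 = V₁ :=
        block_eq_block hπ (Finset.mem_of_mem_erase hmem) hV₁ hx (Finset.mem_of_mem_erase hx)
      exact Finset.notMem_erase 1 V₁ (heq.symm ▸ h1V₁)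
    rw [Finset.erase_insert hne, Finset.insert_erase hV₁]

lemma pmapJ_mem {S : Finset ℕ} (h1S : 1 ∈ S) {π : Finset (Finset ℕ)}
    (hπ : IsSetPartition S π) :
    pmapJ π ∈ (setPartitions (S.erase 1)).sigma (fun π' => insert ∅ π') := by
  obtain ⟨V₁', ⟨hV₁', h1V₁'⟩, _⟩ := hπ.2.2 1 h1S
  have hex : ∃ V, V ∈ π ∧ 1 ∈ V := ⟨V₁', hV₁', h1V₁'⟩
  rw [pmapJ, dif_pos hex]
  have hV₁ : hex.choose ∈ π := hex.choose_spec.1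
  have h1V₁ : 1 ∈ hex.choose := hex.choose_spec.2
  apply Finset.mem_sigma.2
  constructor
  · exact mem_setPartitions.2 (partC hπ hV₁ h1V₁)
  · by_cases hsing : hex.choose = {1}
    · have : hex.choose.erase 1 = ∅ := by rw [hsing, Finset.erase_singleton]
      rw [this]
      exact Finset.mem_insert_self _ _
    · apply Finset.mem_insert_of_mem
      rw [phi_eq hπ hV₁ h1V₁, if_neg hsing]
      exact Finset.mem_insert_self _ _

lemma pmapI_mem {S : Finset ℕ} (h1S : 1 ∈ S)
    {p : (_ : Finset (Finset ℕ)) × Finset ℕ}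
    (hp : p ∈ (setPartitions (S.erase 1)).sigma (fun π' => insert ∅ π')) :
    pmapI p ∈ setPartitions S := by
  obtain ⟨π', W⟩ := p
  have hπ' : IsSetPartition (S.erase 1) π' :=
    mem_setPartitions.1 (Finset.mem_sigma.1 hp).1
  have hW : W ∈ insert ∅ π' := (Finset.mem_sigma.1 hp).2
  rcases Finset.mem_insert.1 hW with rfl | hW
  · rw [show pmapI ⟨π', ∅⟩ = insert {1} π' from if_pos rfl]
    exact mem_setPartitions.2 (partA h1S hπ')
  · rw [show pmapI ⟨π', W⟩ = insert (insert 1 W) (π'.erase W) from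
      if_neg (Finset.nonempty_iff_ne_empty.1 (hπ'.2.1 W hW))]
    exact mem_setPartitions.2 (partB h1S hπ' hW)

lemma sum_partitions_eq_zero {S : Finset ℕ} (h1S : 1 ∈ S) (hS' : (S.erase 1).Nonempty)
    (χ : Finset ℕ → ℂ) (hχ1 : χ {1} = 1)
    (hχ : ∀ V : Finset ℕ, 1 ∉ V → χ (insert 1 V) = χ V) :
    ∑ π ∈ setPartitions S,
      (-1 : ℂ) ^ (π.card - 1) * ((π.card - 1).factorial : ℂ) * ∏ V ∈ π, χ V = 0 := by
  have key : ∑ π ∈ setPartitions S,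
      (-1 : ℂ) ^ (π.card - 1) * ((π.card - 1).factorial : ℂ) * ∏ V ∈ π, χ V
      = ∑ p ∈ (setPartitions (S.erase 1)).sigma (fun π' => insert ∅ π'),
        (-1 : ℂ) ^ ((pmapI p).card - 1) * (((pmapI p).card - 1).factorial : ℂ) *
          ∏ V ∈ pmapI p, χ V := by
    apply Finset.sum_nbij' pmapJ pmapI
    · intro π hπ
      exact pmapJ_mem h1S (mem_setPartitions.1 hπ)
    · intro p hp
      exact pmapI_mem h1S hp
    · intro π hπ
      exact pmapI_pmapJ h1S (mem_setPartitions.1 hπ)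
    · intro p hp
      obtain ⟨π', W⟩ := p
      exact pmapJ_pmapI h1S (mem_setPartitions.1 (Finset.mem_sigma.1 hp).1)
        (Finset.mem_sigma.1 hp).2
    · intro π hπ
      rw [pmapI_pmapJ h1S (mem_setPartitions.1 hπ)]
  rw [key, Finset.sum_sigma]
  apply Finset.sum_eq_zero
  intro π' hπ'mem
  have hπ' : IsSetPartition (S.erase 1) π' := mem_setPartitions.1 hπ'mem
  have h₀ : ∅ ∉ π' := empty_not_mem hπ'
  have hπ'ne : π'.Nonempty := by
    obtain ⟨a, ha⟩ := hS'
    obtain ⟨U, ⟨hU, _⟩, _⟩ := hπ'.2.2 a ha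
    exact ⟨U, hU⟩
  obtain ⟨m, hm⟩ : ∃ m, π'.card = m + 1 :=
    ⟨π'.card - 1, (Nat.succ_pred_eq_of_pos (Finset.card_pos.2 hπ'ne)).symm⟩
  rw [Finset.sum_insert h₀]
  have hterms : ∀ W ∈ π',
      (-1 : ℂ) ^ ((pmapI ⟨π', W⟩).card - 1) * (((pmapI ⟨π', W⟩).card - 1).factorial : ℂ) *
        ∏ V ∈ pmapI ⟨π', W⟩, χ V
      = (-1 : ℂ) ^ m * (m.factorial : ℂ) * ∏ V ∈ π', χ V := by
    intro W hW
    have hWne : W ≠ ∅ := Finset.nonempty_iff_ne_empty.1 (hπ'.2.1 W hW)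
    have h1W : 1 ∉ W := blocks_not_one hπ' hW
    have hmemerase : insert 1 W ∉ π'.erase W := insert_one_not_mem_erase hπ' W W
    rw [show pmapI ⟨π', W⟩ = insert (insert 1 W) (π'.erase W) from if_neg hWne]
    have hcard : (insert (insert 1 W) (π'.erase W)).card = m + 1 := by
      rw [Finset.card_insert_of_notMem hmemerase, Finset.card_erase_of_mem hW, hm]
      omega
    have hprod : ∏ V ∈ insert (insert 1 W) (π'.erase W), χ V = ∏ V ∈ π', χ V := by
      rw [Finset.prod_insert hmemerase, hχ W h1W, Finset.mul_prod_erase π' χ hW]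
    rw [hcard, hprod]
    simp
  rw [Finset.sum_congr rfl hterms, Finset.sum_const,
    show pmapI ⟨π', ∅⟩ = insert {1} π' from if_pos rfl]
  have hs1 : {1} ∉ π' := singleton_one_not_mem hπ'
  have hcard0 : (insert {1} π').card = m + 2 := by
    rw [Finset.card_insert_of_notMem hs1, hm]
  have hprod0 : ∏ V ∈ insert {1} π', χ V = ∏ V ∈ π', χ V := by
    rw [Finset.prod_insert hs1, hχ1, one_mul]
  rw [hcard0, hprod0, hm]
  simp only [Nat.add_sub_cancel, nsmul_eq_mul]
  rw [show m + 2 - 1 = m + 1 from rfl, Nat.factorial_succ]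
  push_cast
  ring

lemma blockProd_empty [Monoid 𝔘] (A : ℕ → 𝔘) : blockProd A (∅ : Finset ℕ) = 1 := by
  simp [blockProd, blockList]

/-- a uniform bound C‖A‖‖B‖f(g) on the covariance implies, for each n ≥ 2, a
bound C_n (∏‖A_j‖) f(g) on the n-th classical cumulant with the first argument translated,
for all g with f(g) ≤ 1. -/
theorem cumulant_uniform_bound {G : Type*} [Group G]
    [NormedRing 𝔘] [StarRing 𝔘] [CStarRing 𝔘] [NormedAlgebra ℂ 𝔘] [StarModule ℂ 𝔘]
    [CompleteSpace 𝔘]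
    (α : G → 𝔘 ≃⋆ₐ[ℂ] 𝔘) (hα : IsStarAutoRep α)
    (ω : 𝔘 →ₗ[ℂ] ℂ) (hω : IsState ω) (hωb : ∀ X : 𝔘, ‖ω X‖ ≤ ‖X‖)
    (hiso : ∀ (x : G) (A : 𝔘), ‖α x A‖ = ‖A‖)
    (f : G → ℝ) (hf : ∀ x : G, 0 < f x) (C : ℝ) (hC : 0 < C)
    (hcl : ∀ (x : G) (A B : 𝔘),
      ‖ω (α x A * B) - ω (α x A) * ω B‖ ≤ C * ‖A‖ * ‖B‖ * f x) :
    ∀ n, 2 ≤ n → ∃ Cn : ℝ, 0 < Cn ∧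
      ∀ x : G, f x ≤ 1 → ∀ A : ℕ → 𝔘,
        ‖cumulant ⇑ω (Function.update A 1 (α x (A 1))) (Finset.Icc 1 n)‖ ≤
          Cn * (∏ j ∈ Finset.Icc 1 n, ‖A j‖) * f x := by
  intro n hn
  have : Nontrivial 𝔘 := by
    refine ⟨0, 1, fun h => ?_⟩
    have hu := hω.unital
    rw [← h, map_zero] at hu
    exact zero_ne_one hu
  have : NormOneClass 𝔘 := ⟨CStarRing.norm_one⟩
  set S := Finset.Icc 1 n with hSdef
  have h1S : 1 ∈ S := Finset.mem_Icc.2 ⟨le_refl 1, by omega⟩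
  have hS' : (S.erase 1).Nonempty :=
    ⟨2, Finset.mem_erase.2 ⟨by norm_num, Finset.mem_Icc.2 ⟨by norm_num, hn⟩⟩⟩
  set B : ℝ := ∑ π ∈ setPartitions S, ((π.card - 1).factorial : ℝ) with hBdef
  have hB0 : 0 ≤ B := Finset.sum_nonneg fun _ _ => Nat.cast_nonneg _
  refine ⟨C * (B + 1), by positivity, ?_⟩
  intro x hx A
  set A' := Function.update A 1 (α x (A 1)) with hA'def
  set lam := ω (α x (A 1)) with hlamdef
  set χ : Finset ℕ → ℂ := fun V => ω (blockProd A' (V.erase 1)) with hχdef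
  have hA'norm : ∀ j, ‖A' j‖ = ‖A j‖ := by
    intro j
    by_cases hj : j = 1
    · subst hj; rw [hA'def, Function.update_self, hiso]
    · rw [hA'def, Function.update_of_ne hj]
  have hA'off : ∀ j, j ≠ 1 → A' j = A j := fun j hj => by
    rw [hA'def, Function.update_of_ne hj]
  have hχ1 : χ {1} = 1 := by
    rw [hχdef]
    simp only [Finset.erase_singleton]
    rw [blockProd_empty, hω.unital]
  have hχup : ∀ V : Finset ℕ, 1 ∉ V → χ (insert 1 V) = χ V := by
    intro V hV
    rw [hχdef]
    simp only [Finset.erase_insert hV, Finset.erase_eq_of_notMem hV]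
  have hzero := sum_partitions_eq_zero h1S hS' χ hχ1 hχup
  have hχeq : ∀ V : Finset ℕ, 1 ∉ V → χ V = ω (blockProd A' V) := by
    intro V hV
    rw [hχdef]
    simp only [Finset.erase_eq_of_notMem hV]
  -- per-partition bound
  have hbound : ∀ π ∈ setPartitions S,
      ‖(∏ V ∈ π, ω (blockProd A' V)) - lam * ∏ V ∈ π, χ V‖
        ≤ C * (∏ j ∈ S, ‖A j‖) * f x := by
    intro π hπmem
    have hπ := mem_setPartitions.1 hπmem
    obtain ⟨V₁, ⟨hV₁, h1V₁⟩, _⟩ := hπ.2.2 1 h1S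
    have hge : ∀ j ∈ V₁, 1 ≤ j := fun j hj => (Finset.mem_Icc.1 (hπ.1 V₁ hV₁ hj)).1
    set R := blockProd A' (V₁.erase 1) with hRdef
    have hRnorm : ‖R‖ ≤ ∏ j ∈ V₁.erase 1, ‖A j‖ := by
      refine (norm_blockProd_le A' (V₁.erase 1)).trans_eq ?_
      exact Finset.prod_congr rfl fun j _ => hA'norm j
    have hprodV₁ : blockProd A' V₁ = α x (A 1) * R := by
      rw [hRdef, blockProd_cons A' h1V₁ hge, hA'def, Function.update_self]
    have hχV₁ : χ V₁ = ω R := by rw [hχdef]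
    have herase : ∀ V ∈ π.erase V₁, χ V = ω (blockProd A' V) := fun V hV =>
      hχeq V (not_mem_of_mem_erase_block hπ hV₁ h1V₁ hV)
    rw [← Finset.mul_prod_erase π _ hV₁, ← Finset.mul_prod_erase π χ hV₁,
      Finset.prod_congr rfl herase, hχV₁, hprodV₁, ← mul_assoc, ← sub_mul]
    rw [norm_mul]
    have h1 : ‖ω (α x (A 1) * R) - lam * ω R‖ ≤ C * ‖A 1‖ * ‖R‖ * f x := by
      rw [hlamdef]
      exact hcl x (A 1) R
    have h2 : ‖∏ V ∈ π.erase V₁, ω (blockProd A' V)‖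
        ≤ ∏ V ∈ π.erase V₁, ∏ j ∈ V, ‖A j‖ := by
      rw [norm_prod]
      refine Finset.prod_le_prod (fun V _ => norm_nonneg _) fun V hV => ?_
      refine (hωb _).trans ((norm_blockProd_le A' V).trans_eq ?_)
      exact Finset.prod_congr rfl fun j _ => hA'norm j
    calc ‖ω (α x (A 1) * R) - lam * ω R‖ * ‖∏ V ∈ π.erase V₁, ω (blockProd A' V)‖
        ≤ (C * ‖A 1‖ * (∏ j ∈ V₁.erase 1, ‖A j‖) * f x) *
          ∏ V ∈ π.erase V₁, ∏ j ∈ V, ‖A j‖ := by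
          have hfx := (hf x).le
          have hC' := hC.le
          have h1' : ‖ω (α x (A 1) * R) - lam * ω R‖
              ≤ C * ‖A 1‖ * (∏ j ∈ V₁.erase 1, ‖A j‖) * f x := by
            refine h1.trans ?_
            gcongr
          exact mul_le_mul h1' h2 (norm_nonneg _) (by positivity)
      _ = C * (∏ j ∈ S, ‖A j‖) * f x := by
          rw [← prod_partition hπ (fun j => ‖A j‖), ← Finset.mul_prod_erase π _ hV₁,
            ← Finset.mul_prod_erase V₁ _ h1V₁]
          ring
  -- assemble
  have hsplit : cumulant ⇑ω A' S =
      ∑ π ∈ setPartitions S,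
        ((-1 : ℂ) ^ (π.card - 1) * ((π.card - 1).factorial : ℂ)) *
          ((∏ V ∈ π, ω (blockProd A' V)) - lam * ∏ V ∈ π, χ V) := by
    have : ∑ π ∈ setPartitions S,
        ((-1 : ℂ) ^ (π.card - 1) * ((π.card - 1).factorial : ℂ)) *
          ((∏ V ∈ π, ω (blockProd A' V)) - lam * ∏ V ∈ π, χ V)
        = cumulant ⇑ω A' S - lam *
          ∑ π ∈ setPartitions S,
            (-1 : ℂ) ^ (π.card - 1) * ((π.card - 1).factorial : ℂ) * ∏ V ∈ π, χ V := by
      rw [cumulant, Finset.mul_sum, ← Finset.sum_sub_distrib]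
      exact Finset.sum_congr rfl fun π _ => by ring
    rw [this, hzero, mul_zero, sub_zero]
  rw [hsplit]
  have hwnorm : ∀ π : Finset (Finset ℕ),
      ‖(-1 : ℂ) ^ (π.card - 1) * ((π.card - 1).factorial : ℂ)‖
        = ((π.card - 1).factorial : ℝ) := by
    intro π
    rw [norm_mul, norm_pow, norm_neg, norm_one, one_pow, one_mul, Complex.norm_natCast]
  calc ‖∑ π ∈ setPartitions S, ((-1 : ℂ) ^ (π.card - 1) * ((π.card - 1).factorial : ℂ)) *
          ((∏ V ∈ π, ω (blockProd A' V)) - lam * ∏ V ∈ π, χ V)‖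
      ≤ ∑ π ∈ setPartitions S, ((π.card - 1).factorial : ℝ) *
          (C * (∏ j ∈ S, ‖A j‖) * f x) := by
        refine (norm_sum_le _ _).trans (Finset.sum_le_sum fun π hπ => ?_)
        rw [norm_mul, hwnorm π]
        exact mul_le_mul_of_nonneg_left (hbound π hπ) (Nat.cast_nonneg _)
    _ = B * (C * (∏ j ∈ S, ‖A j‖) * f x) := by rw [← Finset.sum_mul]
    _ ≤ C * (B + 1) * (∏ j ∈ S, ‖A j‖) * f x := by
        have hP : (0:ℝ) ≤ ∏ j ∈ S, ‖A j‖ := Finset.prod_nonneg fun _ _ => norm_nonneg _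
        nlinarith [(hf x).le, mul_nonneg hP (hf x).le, mul_nonneg (mul_nonneg hP (hf x).le) hB0]
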